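/- Define S_r(a,b,c) := ∑_{k=0}^{a} k^{2r+1}·C(a+b,a+k)·C(b+c,b+k)·C(c+a,c+k) for non-negative integers a,b,c and r ≥ 1, with a ≥ 1. Then S_r(a,b,c) = a²·S_{r−1}(a,b,c) − (a+b)·(a+c)·S_{r−1}(a−1,b,c). -/

import Mathlib

open Finset

/-- `S r a b c = ∑_{k=0}^{a} k^{2r+1}·C(a+b,a+k)·C(b+c,b+k)·C(c+a,c+k)`. -/
def S (r a b c : ℕ) : ℤ :=
  ∑ k ∈ range (a + 1),
    (k : ℤ) ^ (2 * r + 1) * ((a + b).choose (a + k) : ℤ) * ((b + c).choose (b + k) : ℤ) *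
      ((c + a).choose (c + k) : ℤ)

theorem stmt_19 (r a b c : ℕ) (hr : 1 ≤ r) (ha : 1 ≤ a) :
    S r a b c =
      (a : ℤ) ^ 2 * S (r - 1) a b c - ((a : ℤ) + b) * ((a : ℤ) + c) * S (r - 1) (a - 1) b c := by
  obtain ⟨s, rfl⟩ : ∃ s, r = s + 1 := ⟨r - 1, (Nat.succ_pred_eq_of_pos hr).symm⟩
  obtain ⟨n, rfl⟩ : ∃ n, a = n + 1 := ⟨a - 1, (Nat.succ_pred_eq_of_pos ha).symm⟩
  simp only [Nat.add_sub_cancel]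
  have hS' : S s n b c = ∑ k ∈ range (n + 1 + 1),
      (k : ℤ) ^ (2 * s + 1) * ((n + b).choose (n + k) : ℤ) * ((b + c).choose (b + k) : ℤ) *
        ((c + n).choose (c + k) : ℤ) := by
    rw [S]
    symm
    rw [sum_range_succ, Nat.choose_eq_zero_of_lt (show c + n < c + (n + 1) by omega)]
    push_cast
    ring
  rw [S, S, hS', mul_sum, mul_sum, ← sum_sub_distrib]
  apply sum_congr rfl
  intro k hk
  rw [mem_range] at hk
  have hk' : k ≤ n + 1 := Nat.lt_succ_iff.mp hk
  have h1 : ((n + 1 + b).choose (n + 1 + k) : ℤ) * ((n : ℤ) + 1 + k)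
      = ((n : ℤ) + 1 + b) * ((n + b).choose (n + k) : ℤ) := by
    have h := Nat.add_one_mul_choose_eq (n + b) (n + k)
    have h' : (n + b + 1) * (n + b).choose (n + k)
        = (n + 1 + b).choose (n + 1 + k) * (n + k + 1) := by
      rw [show n + 1 + b = n + b + 1 by ring, show n + 1 + k = n + k + 1 by ring]
      exact_mod_cast h
    have := congrArg (fun m : ℕ => (m : ℤ)) h'
    push_cast at this
    linarith [this]
  have h2 : ((c + n + 1).choose (c + k) : ℤ) * ((n : ℤ) + 1 - k)
      = ((n : ℤ) + 1 + c) * ((c + n).choose (c + k) : ℤ) := by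
    have h := Nat.choose_mul_succ_eq (c + n) (c + k)
    have hsub : c + n + 1 - (c + k) = n + 1 - k := by omega
    rw [hsub] at h
    have := congrArg (fun m : ℕ => (m : ℤ)) h
    push_cast [Nat.cast_sub hk'] at this
    linarith [this]
  have hC : ((c + (n + 1)).choose (c + k) : ℤ) = ((c + n + 1).choose (c + k) : ℤ) := rfl
  rw [hC]
  push_cast
  linear_combination -((k : ℤ) ^ (2 * s + 1) * ((b + c).choose (b + k) : ℤ)) *
    (((n : ℤ) + 1 + c) * ((c + n).choose (c + k) : ℤ) * h1 +
      ((n + 1 + b).choose (n + 1 + k) : ℤ) * ((n : ℤ) + 1 + k) * h2)
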